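/- For every nonnegative integer n and every real number x, 𝔠_n(x) = ∑_{k=0}^{n} D^n_t[(2x·sinh(t/2))^k]|_{t=0}, where D^n_t[f]|_{t=0} denotes the n-th derivative of the real function t ↦ f(t) evaluated at t = 0 (the terms with k > n vanish, so the sum may be truncated at k = n). -/

import Mathlib

open Nat Finset

/-- Central factorial numbers of the second kind. -/
noncomputable def centralT (n k : ℕ) : ℝ :=
  (1 / (k ! : ℝ)) * ∑ j ∈ Finset.range (k + 1),
    (-1 : ℝ) ^ j * (k.choose j : ℝ) * ((k : ℝ) / 2 - (j : ℝ)) ^ n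

/-- Central Fubini-like polynomials. -/
noncomputable def centralFubini (n : ℕ) (x : ℝ) : ℝ :=
  ∑ k ∈ Finset.range (n + 1), (k ! : ℝ) * centralT n k * x ^ k

lemma iteratedDeriv_sum_exp (m : ℕ) (a c : ℕ → ℝ) (n : ℕ) (t : ℝ) :
    iteratedDeriv n (fun t => ∑ j ∈ Finset.range m, a j * Real.exp (c j * t)) t
      = ∑ j ∈ Finset.range m, a j * (c j) ^ n * Real.exp (c j * t) := by
  induction n generalizing a with
  | zero => simp
  | succ n ih =>
    rw [iteratedDeriv_succ']
    have hd : deriv (fun t => ∑ j ∈ Finset.range m, a j * Real.exp (c j * t))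
        = fun t => ∑ j ∈ Finset.range m, (a j * c j) * Real.exp (c j * t) := by
      funext s
      have h : ∀ j ∈ Finset.range m,
          HasDerivAt (fun t => a j * Real.exp (c j * t))
            ((a j * c j) * Real.exp (c j * s)) s := by
        intro j _
        have : HasDerivAt (fun t : ℝ => c j * t) (c j) s := by
          simpa using (hasDerivAt_id s).const_mul (c j)
        have := (this.exp).const_mul (a j)
        exact this.congr_deriv (by ring)
      have := HasDerivAt.fun_sum h
      rw [this.deriv]
    rw [hd, ih (fun j => a j * c j)]
    exact Finset.sum_congr rfl (fun j _ => by ring)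

lemma sinh_pow_repr (x : ℝ) (k : ℕ) :
    (fun t : ℝ => (2 * x * Real.sinh (t / 2)) ^ k)
      = fun t => ∑ m ∈ Finset.range (k + 1),
          (x ^ k * (-1 : ℝ) ^ (m + k) * (k.choose m : ℝ))
            * Real.exp (((m : ℝ) - (k : ℝ) / 2) * t) := by
  funext t
  have h1 : 2 * x * Real.sinh (t / 2)
      = x * (Real.exp (t / 2) - Real.exp (-(t / 2))) := by
    rw [Real.sinh_eq]; ring
  rw [h1, mul_pow, sub_pow, Finset.mul_sum]
  refine Finset.sum_congr rfl (fun m hm => ?_)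
  rw [Finset.mem_range] at hm
  have hmk : m ≤ k := Nat.lt_succ_iff.mp hm
  rw [← Real.exp_nat_mul, ← Real.exp_nat_mul]
  have he : Real.exp ((m : ℝ) * (t / 2)) * Real.exp (((k - m : ℕ) : ℝ) * -(t / 2))
      = Real.exp (((m : ℝ) - (k : ℝ) / 2) * t) := by
    rw [← Real.exp_add]
    congr 1
    rw [Nat.cast_sub hmk]; ring
  linear_combination (x ^ k * (-1 : ℝ) ^ (m + k) * (k.choose m : ℝ)) * he

theorem central_fubini_deriv_repr (n : ℕ) (x : ℝ) :
    centralFubini n x =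
      ∑ k ∈ Finset.range (n + 1),
        iteratedDeriv n (fun t : ℝ => (2 * x * Real.sinh (t / 2)) ^ k) 0 := by
  unfold centralFubini centralT
  refine Finset.sum_congr rfl (fun k _ => ?_)
  rw [sinh_pow_repr, iteratedDeriv_sum_exp]
  set S := ∑ j ∈ Finset.range (k + 1),
    (-1 : ℝ) ^ j * (k.choose j : ℝ) * ((k : ℝ) / 2 - (j : ℝ)) ^ n with hS
  have hfac : ((k ! : ℝ)) ≠ 0 := Nat.cast_ne_zero.mpr (Nat.factorial_ne_zero k)
  have hL : (k ! : ℝ) * (1 / (k ! : ℝ) * S) * x ^ k = S * x ^ k := by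
    field_simp
  rw [hL, hS]
  have hrefl := Finset.sum_range_reflect
    (fun j => (-1 : ℝ) ^ j * (k.choose j : ℝ) * ((k : ℝ) / 2 - (j : ℝ)) ^ n) (k + 1)
  rw [← hrefl, Finset.sum_mul]
  refine Finset.sum_congr rfl (fun m hm => ?_)
  rw [Finset.mem_range] at hm
  have hmk : m ≤ k := Nat.lt_succ_iff.mp hm
  simp only [Nat.add_sub_cancel, mul_zero, Real.exp_zero, mul_one]
  have h1 : k.choose (k - m) = k.choose m := Nat.choose_symm hmk
  have h2 : ((-1 : ℝ)) ^ (k - m) = (-1 : ℝ) ^ (m + k) := by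
    have h3 : m + k = (k - m) + 2 * m := by omega
    rw [h3, pow_add]; simp [pow_mul]
  have h4 : (k : ℝ) / 2 - ((k - m : ℕ) : ℝ) = (m : ℝ) - (k : ℝ) / 2 := by
    rw [Nat.cast_sub hmk]; ring
  rw [h1, h2, h4]
  ring
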